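/- Let F : ℝ^d → ℝ^d be a continuous map that is strictly monotone (⟨x-y, F(x)-F(y)⟩ > 0 for all x ≠ y) and coercive (⟨x, F(x)⟩/|x| → ∞ as |x| → ∞). Then for every b ∈ ℝ^d the equation F(x) = b has a unique solution x ∈ ℝ^d. -/

import Mathlib

open scoped RealInnerProductSpace Convolution Topology
open MeasureTheory Metric Function Set Filter ContinuousLinearMap

namespace MCSaux

variable {d : ℕ}

local notation "E" => EuclideanSpace ℝ (Fin d)

theorem antilip {G : E → E} {ε : ℝ} (hε : 0 < ε)
    (h : ∀ x y : E, ε * ‖x - y‖ ^ 2 ≤ ⟪x - y, G x - G y⟫) (x y : E) :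
    ‖x - y‖ ≤ ε⁻¹ * ‖G x - G y‖ := by
  rcases eq_or_ne x y with rfl | hxy
  · simp only [sub_self, norm_zero]
    positivity
  · have h1 := h x y
    have h2 : ⟪x - y, G x - G y⟫ ≤ ‖x - y‖ * ‖G x - G y‖ := real_inner_le_norm _ _
    have h3 : 0 < ‖x - y‖ := by
      rw [norm_pos_iff]; exact sub_ne_zero_of_ne hxy
    rw [le_inv_mul_iff₀ hε]
    nlinarith [h1, h2, h3]

theorem closedRange {G : E → E} (hc : Continuous G) {ε : ℝ} (hε : 0 < ε)
    (h : ∀ x y : E, ε * ‖x - y‖ ^ 2 ≤ ⟪x - y, G x - G y⟫) :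
    IsClosed (Set.range G) := by
  apply IsSeqClosed.isClosed
  intro u p hu hup
  choose x hx using hu
  have hcauchy : CauchySeq fun n => G (x n) := by
    have := hup.cauchySeq
    simpa only [hx] using this
  have hcx : CauchySeq x := by
    rw [Metric.cauchySeq_iff] at hcauchy ⊢
    intro η hη
    obtain ⟨N, hN⟩ := hcauchy (ε * η) (by positivity)
    refine ⟨N, fun m hm n hn => ?_⟩
    have h1 := antilip hε h (x m) (x n)
    have h2 := hN m hm n hn
    rw [dist_eq_norm] at h2 ⊢
    calc ‖x m - x n‖ ≤ ε⁻¹ * ‖G (x m) - G (x n)‖ := h1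
      _ < ε⁻¹ * (ε * η) := by
          exact mul_lt_mul_of_pos_left h2 (inv_pos.2 hε)
      _ = η := by field_simp
  obtain ⟨a, ha⟩ := cauchySeq_tendsto_of_complete hcx
  refine ⟨a, ?_⟩
  have h1 : Tendsto (fun n => G (x n)) atTop (𝓝 (G a)) := (hc.tendsto a).comp ha
  have h2 : Tendsto u atTop (𝓝 (G a)) := by simpa only [hx] using h1
  exact tendsto_nhds_unique h2 hup

theorem linear_bijective {A : E →L[ℝ] E} {ε : ℝ} (hε : 0 < ε)
    (h : ∀ v : E, ε * ‖v‖ ^ 2 ≤ ⟪v, A v⟫) : Function.Bijective A := by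
  have hinj : Function.Injective A := by
    intro v w hvw
    have h1 := h (v - w)
    rw [map_sub, hvw, sub_self, inner_zero_right] at h1
    have h2 : ‖v - w‖ ^ 2 ≤ 0 := by nlinarith [sq_nonneg ‖v - w‖]
    have h3 : ‖v - w‖ ^ 2 = 0 := le_antisymm h2 (sq_nonneg _)
    have := norm_eq_zero.mp (sq_eq_zero_iff.mp h3)
    exact sub_eq_zero.mp this
  refine ⟨hinj, ?_⟩
  exact (LinearMap.injective_iff_surjective (f := (A : E →ₗ[ℝ] E))).mp hinj


theorem fderiv_mono {G : E → E} (hG : ContDiff ℝ 1 G) {ε : ℝ}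
    (h : ∀ x y : E, ε * ‖x - y‖ ^ 2 ≤ ⟪x - y, G x - G y⟫) (x v : E) :
    ε * ‖v‖ ^ 2 ≤ ⟪v, fderiv ℝ G x v⟫ := by
  have hline : HasDerivAt (fun t : ℝ => x + t • v) v 0 := by
    simpa using ((hasDerivAt_id (0 : ℝ)).smul_const v).const_add x
  have hd : HasDerivAt (fun t : ℝ => G (x + t • v)) (fderiv ℝ G x v) 0 := by
    have hfd := (hG.differentiable one_ne_zero (x + (0 : ℝ) • v)).hasFDerivAt
    have := hfd.comp_hasDerivAt 0 hline
    rw [zero_smul, add_zero] at this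
    exact this
  rw [hasDerivAt_iff_tendsto_slope] at hd
  have hten : Tendsto (fun t : ℝ => ⟪v, slope (fun t : ℝ => G (x + t • v)) 0 t⟫)
      (𝓝[>] (0 : ℝ)) (𝓝 ⟪v, fderiv ℝ G x v⟫) := by
    have hcont : Continuous fun w : E => ⟪v, w⟫ := continuous_const.inner continuous_id
    exact (hcont.tendsto _).comp (hd.mono_left (nhdsWithin_mono 0 fun t ht => ne_of_gt ht))
  refine ge_of_tendsto hten ?_
  filter_upwards [self_mem_nhdsWithin] with t ht
  have ht0 : (0 : ℝ) < t := ht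
  have key := h (x + t • v) (x + (0 : ℝ) • v)
  have harg : (x + t • v) - (x + (0 : ℝ) • v) = t • v := by
    simp [sub_eq_iff_eq_add]
  rw [harg] at key
  have key2 : ε * (t ^ 2 * ‖v‖ ^ 2) ≤ t * ⟪v, G (x + t • v) - G (x + (0 : ℝ) • v)⟫ := by
    have := key
    rw [norm_smul, real_inner_smul_left] at this
    calc ε * (t ^ 2 * ‖v‖ ^ 2) = ε * (‖t‖ * ‖v‖) ^ 2 := by
          rw [Real.norm_eq_abs, mul_pow, sq_abs]
      _ ≤ t * ⟪v, G (x + t • v) - G (x + (0 : ℝ) • v)⟫ := this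
  have hslope : slope (fun t : ℝ => G (x + t • v)) 0 t
      = t⁻¹ • (G (x + t • v) - G (x + (0 : ℝ) • v)) := by
    simp [slope_def_field, slope, vsub_eq_sub]
  rw [hslope, real_inner_smul_right]
  rw [le_inv_mul_iff₀ ht0]
  nlinarith [key2, ht0]

theorem smooth_surjective {G : E → E} (hG : ContDiff ℝ 1 G) {ε : ℝ} (hε : 0 < ε)
    (h : ∀ x y : E, ε * ‖x - y‖ ^ 2 ≤ ⟪x - y, G x - G y⟫) : Function.Surjective G := by
  have hbij : ∀ x : E, Function.Bijective (fderiv ℝ G x) := fun x =>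
    linear_bijective hε (fun v => fderiv_mono hG h x v)
  have hopen : IsOpenMap G := by
    have hker : ∀ x : E, LinearMap.ker (fderiv ℝ G x : E →ₗ[ℝ] E) = ⊥ := fun x =>
      (LinearMap.ker_eq_bot (f := (fderiv ℝ G x : E →ₗ[ℝ] E))).mpr (hbij x).1
    have hrange : ∀ x : E, LinearMap.range (fderiv ℝ G x : E →ₗ[ℝ] E) = ⊤ := fun x =>
      (LinearMap.range_eq_top (f := (fderiv ℝ G x : E →ₗ[ℝ] E))).mpr (hbij x).2
    refine isOpenMap_of_hasStrictFDerivAt_equiv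
      (f' := fun x => ContinuousLinearEquiv.ofBijective (fderiv ℝ G x) (hker x) (hrange x))
      (fun x => ?_)
    have hco : ((ContinuousLinearEquiv.ofBijective (fderiv ℝ G x) (hker x) (hrange x)) :
        E →L[ℝ] E) = fderiv ℝ G x := rfl
    rw [hco]
    exact (hG.contDiffAt).hasStrictFDerivAt one_ne_zero
  have hclopen : IsClopen (Set.range G) := ⟨closedRange hG.continuous hε h, hopen.isOpen_range⟩
  have huniv : Set.range G = Set.univ := hclopen.eq_univ ⟨G 0, 0, rfl⟩
  exact Set.range_eq_univ.mp huniv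


theorem conv_mono {G : E → E} (hc : Continuous G) {ε : ℝ}
    (h : ∀ x y : E, ε * ‖x - y‖ ^ 2 ≤ ⟪x - y, G x - G y⟫) (φ : ContDiffBump (0 : E)) (x y : E) :
    ε * ‖x - y‖ ^ 2 ≤ ⟪x - y, (φ.normed volume ⋆[lsmul ℝ ℝ, volume] G) x
      - (φ.normed volume ⋆[lsmul ℝ ℝ, volume] G) y⟫ := by
  have hint : ∀ z : E, Integrable (fun t => φ.normed volume t • G (z - t)) volume := by
    intro z
    apply Continuous.integrable_of_hasCompactSupport
    · exact (φ.continuous_normed).smul (hc.comp (continuous_const.sub continuous_id))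
    · exact (φ.hasCompactSupport_normed).smul_right
  have hconv : ∀ z : E, (φ.normed volume ⋆[lsmul ℝ ℝ, volume] G) z
      = ∫ t, φ.normed volume t • G (z - t) := by
    intro z
    rw [convolution_def]
    simp only [lsmul_apply]
  have hint2 : Integrable (fun t => φ.normed volume t • (G (x - t) - G (y - t))) volume := by
    simp_rw [smul_sub]
    exact (hint x).sub (hint y)
  rw [hconv, hconv, ← integral_sub (hint x) (hint y)]
  simp_rw [← smul_sub]
  rw [← integral_inner hint2 (x - y)]
  have hint3 : Integrable (fun t => φ.normed volume t * ⟪x - y, G (x - t) - G (y - t)⟫) volume := by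
    have := Integrable.const_inner (𝕜 := ℝ) (x - y) hint2
    simpa only [real_inner_smul_right] using this
  simp_rw [real_inner_smul_right]
  have hstep : ε * ‖x - y‖ ^ 2 = ∫ t : E, φ.normed volume t * (ε * ‖x - y‖ ^ 2) := by
    rw [integral_mul_const, φ.integral_normed, one_mul]
  rw [hstep]
  apply integral_mono (φ.integrable_normed.mul_const _) hint3
  intro t
  have harg : (x - t) - (y - t) = x - y := by abel
  have := h (x - t) (y - t)
  rw [harg] at this
  exact mul_le_mul_of_nonneg_left this (φ.nonneg_normed t)


theorem cont_strong_mono_surjective {G : E → E} (hc : Continuous G) {ε : ℝ} (hε : 0 < ε)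
    (h : ∀ x y : E, ε * ‖x - y‖ ^ 2 ≤ ⟪x - y, G x - G y⟫) : Function.Surjective G := by
  intro b
  have hclosed := closedRange hc hε h
  suffices hb : b ∈ closure (Set.range G) by
    rwa [hclosed.closure_eq] at hb
  rw [Metric.mem_closure_iff]
  intro η hη
  obtain ⟨C₀, hC₀⟩ := (isCompact_closedBall (0 : E) 1).exists_bound_of_continuousOn
    (Continuous.continuousOn (f := fun z => G z - G 0) (hc.sub continuous_const))
  have hC₀nn : 0 ≤ C₀ := le_trans (norm_nonneg _) (hC₀ 0 (mem_closedBall_self zero_le_one))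
  set K := ε⁻¹ * (‖b‖ + (C₀ + ‖G 0‖)) with hKdef
  have hKnn : 0 ≤ K := by positivity
  have huc := (isCompact_closedBall (0 : E) (K + 1)).uniformContinuousOn_of_continuous
    hc.continuousOn
  rw [Metric.uniformContinuousOn_iff] at huc
  obtain ⟨δ₀, hδ₀, hδ⟩ := huc (η / 2) (by positivity)
  set δ := min δ₀ 1 with hδdef
  have hδpos : 0 < δ := lt_min hδ₀ one_pos
  have hδ1 : δ ≤ 1 := min_le_right _ _
  set φ : ContDiffBump (0 : E) := ⟨δ / 2, δ, by positivity, by linarith⟩ with hφdef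
  have hrOut : φ.rOut = δ := rfl
  have hmono := fun x y => conv_mono hc h φ x y
  have hsmooth : ContDiff ℝ 1 (φ.normed volume ⋆[lsmul ℝ ℝ, volume] G) :=
    HasCompactSupport.contDiff_convolution_left _ φ.hasCompactSupport_normed
      φ.contDiff_normed hc.locallyIntegrable
  obtain ⟨y, hy⟩ := smooth_surjective hsmooth hε hmono b
  have hG0 : dist ((φ.normed volume ⋆[lsmul ℝ ℝ, volume] G) 0) (G 0) ≤ C₀ := by
    apply ContDiffBump.dist_normed_convolution_le hc.aestronglyMeasurable
    intro z hz
    rw [dist_eq_norm]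
    apply hC₀
    rw [hrOut] at hz
    exact closedBall_subset_closedBall hδ1 (ball_subset_closedBall hz)
  have hGd0 : ‖(φ.normed volume ⋆[lsmul ℝ ℝ, volume] G) 0‖ ≤ C₀ + ‖G 0‖ := by
    rw [dist_eq_norm] at hG0
    calc ‖(φ.normed volume ⋆[lsmul ℝ ℝ, volume] G) 0‖
        = ‖((φ.normed volume ⋆[lsmul ℝ ℝ, volume] G) 0 - G 0) + G 0‖ := by
          rw [sub_add_cancel]
      _ ≤ ‖(φ.normed volume ⋆[lsmul ℝ ℝ, volume] G) 0 - G 0‖ + ‖G 0‖ := norm_add_le _ _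
      _ ≤ C₀ + ‖G 0‖ := by linarith
  have hyK : ‖y‖ ≤ K := by
    have h1 := hmono y 0
    rw [sub_zero] at h1
    have h2 : ⟪y, (φ.normed volume ⋆[lsmul ℝ ℝ, volume] G) y
        - (φ.normed volume ⋆[lsmul ℝ ℝ, volume] G) 0⟫
        ≤ ‖y‖ * ‖(φ.normed volume ⋆[lsmul ℝ ℝ, volume] G) y
        - (φ.normed volume ⋆[lsmul ℝ ℝ, volume] G) 0‖ := real_inner_le_norm _ _
    have h3 : ‖(φ.normed volume ⋆[lsmul ℝ ℝ, volume] G) y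
        - (φ.normed volume ⋆[lsmul ℝ ℝ, volume] G) 0‖ ≤ ‖b‖ + (C₀ + ‖G 0‖) := by
      rw [hy]
      calc ‖b - (φ.normed volume ⋆[lsmul ℝ ℝ, volume] G) 0‖
          ≤ ‖b‖ + ‖(φ.normed volume ⋆[lsmul ℝ ℝ, volume] G) 0‖ := norm_sub_le _ _
        _ ≤ ‖b‖ + (C₀ + ‖G 0‖) := by linarith
    rcases eq_or_lt_of_le (norm_nonneg y) with h0 | h0
    · rw [← h0]; exact hKnn
    · rw [hKdef, le_inv_mul_iff₀ hε]
      nlinarith [h1, h2, h3, h0]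
  refine ⟨G y, Set.mem_range_self y, ?_⟩
  have hdist : dist ((φ.normed volume ⋆[lsmul ℝ ℝ, volume] G) y) (G y) ≤ η / 2 := by
    apply ContDiffBump.dist_normed_convolution_le hc.aestronglyMeasurable
    intro z hz
    rw [hrOut] at hz
    have hzy : ‖z - y‖ < δ := by
      rw [mem_ball, dist_eq_norm] at hz
      exact hz
    have hzn : ‖z‖ ≤ ‖z - y‖ + ‖y‖ := by
      calc ‖z‖ = ‖(z - y) + y‖ := by rw [sub_add_cancel]
        _ ≤ ‖z - y‖ + ‖y‖ := norm_add_le _ _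
    have hzb : z ∈ closedBall (0 : E) (K + 1) := by
      rw [mem_closedBall, dist_zero_right]
      linarith
    have hyb : y ∈ closedBall (0 : E) (K + 1) := by
      rw [mem_closedBall, dist_zero_right]
      linarith
    refine le_of_lt (hδ z hzb y hyb ?_)
    rw [dist_eq_norm]
    calc ‖z - y‖ < δ := hzy
      _ ≤ δ₀ := min_le_left _ _
  rw [dist_comm]
  calc dist (G y) b = dist (G y) ((φ.normed volume ⋆[lsmul ℝ ℝ, volume] G) y) := by rw [hy]
    _ ≤ η / 2 := by rw [dist_comm]; exact hdist
    _ < η := by linarith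


end MCSaux

open MCSaux

theorem monotone_coercive_surjective (d : ℕ)
    (F : EuclideanSpace ℝ (Fin d) → EuclideanSpace ℝ (Fin d))
    (hcont : Continuous F)
    (hmono : ∀ x y, x ≠ y → 0 < ⟪x - y, F x - F y⟫)
    (hcoer : ∀ M > (0 : ℝ), ∃ R : ℝ, ∀ x, R ≤ ‖x‖ → M * ‖x‖ ≤ ⟪x, F x⟫) :
    ∀ b : EuclideanSpace ℝ (Fin d), ∃! x, F x = b := by
  intro b
  have hmono0 : ∀ x y : EuclideanSpace ℝ (Fin d), 0 ≤ ⟪x - y, F x - F y⟫ := by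
    intro x y
    rcases eq_or_ne x y with rfl | hxy
    · simp
    · exact le_of_lt (hmono x y hxy)
  have hGn : ∀ n : ℕ, ∃ x : EuclideanSpace ℝ (Fin d), F x + ((n : ℝ) + 1)⁻¹ • x = b := by
    intro n
    have hcpos : 0 < ((n : ℝ) + 1)⁻¹ := by positivity
    have hsm : ∀ x y : EuclideanSpace ℝ (Fin d), ((n : ℝ) + 1)⁻¹ * ‖x - y‖ ^ 2
        ≤ ⟪x - y, (F x + ((n : ℝ) + 1)⁻¹ • x) - (F y + ((n : ℝ) + 1)⁻¹ • y)⟫ := by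
      intro x y
      have heq : (F x + ((n : ℝ) + 1)⁻¹ • x) - (F y + ((n : ℝ) + 1)⁻¹ • y)
          = (F x - F y) + ((n : ℝ) + 1)⁻¹ • (x - y) := by
        rw [smul_sub]; abel
      rw [heq, inner_add_right, real_inner_smul_right, real_inner_self_eq_norm_sq]
      have := hmono0 x y
      nlinarith [this]
    exact cont_strong_mono_surjective (G := fun x => F x + ((n : ℝ) + 1)⁻¹ • x)
      (hcont.add (continuous_const_smul _)) hcpos hsm b
  choose x hx using hGn
  obtain ⟨R, hR⟩ := hcoer (‖b‖ + 1) (by positivity)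
  set K := max R 0 with hKdef
  have hKnn : 0 ≤ K := le_max_right _ _
  have hmem : ∀ n, x n ∈ Metric.closedBall (0 : EuclideanSpace ℝ (Fin d)) K := by
    intro n
    rw [Metric.mem_closedBall, dist_zero_right]
    rcases lt_or_ge ‖x n‖ R with hlt | hge
    · exact le_trans (le_of_lt hlt) (le_max_left _ _)
    · have h1 := hR (x n) hge
      have h2 : F (x n) = b - ((n : ℝ) + 1)⁻¹ • x n := by
        rw [← hx n]; abel
      rw [h2, inner_sub_right, real_inner_smul_right, real_inner_self_eq_norm_sq] at h1
      have h3 : ⟪x n, b⟫ ≤ ‖x n‖ * ‖b‖ := real_inner_le_norm _ _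
      have hcpos : 0 < ((n : ℝ) + 1)⁻¹ := by positivity
      have h4 : ‖x n‖ ≤ 0 := by nlinarith [norm_nonneg (x n), sq_nonneg ‖x n‖]
      linarith [norm_nonneg (x n)]
  obtain ⟨a, -, ψ, hψmono, hψt⟩ :=
    tendsto_subseq_of_bounded Metric.isBounded_closedBall hmem
  have h1 : Tendsto (fun k => F (x (ψ k))) atTop (𝓝 (F a)) := (hcont.tendsto a).comp hψt
  have hc0 : Tendsto (fun k => ((ψ k : ℝ) + 1)⁻¹) atTop (𝓝 0) := by
    have hbase : Tendsto (fun m : ℕ => ((m : ℝ) + 1)⁻¹) atTop (𝓝 0) := by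
      simpa only [one_div] using tendsto_one_div_add_atTop_nhds_zero_nat (𝕜 := ℝ)
    exact hbase.comp hψmono.tendsto_atTop
  have h2 : Tendsto (fun k => F (x (ψ k))) atTop (𝓝 b) := by
    have hsmul : Tendsto (fun k => ((ψ k : ℝ) + 1)⁻¹ • x (ψ k)) atTop
        (𝓝 ((0 : ℝ) • a)) := hc0.smul hψt
    rw [zero_smul] at hsmul
    have heq : ∀ k, F (x (ψ k)) = b - ((ψ k : ℝ) + 1)⁻¹ • x (ψ k) := by
      intro k
      rw [← hx (ψ k)]; abel
    simp_rw [heq]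
    simpa using (tendsto_const_nhds (x := b)).sub hsmul
  have hFa : F a = b := tendsto_nhds_unique h1 h2
  refine ⟨a, hFa, ?_⟩
  intro y hy
  by_contra hne
  have := hmono y a hne
  rw [hy, hFa, sub_self, inner_zero_right] at this
  exact lt_irrefl 0 this
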